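/- Let R be a right noetherian ring and let E be an indecomposable injective right R-module for which there exists a finitely generated right R-module A such that, for every indecomposable injective right R-module F, Hom(A,F) ≠ 0 if and only if F is isomorphic to E. Then E has a simple submodule. -/

import Mathlib

open MulOpposite

universe u

/-- A module is indecomposable if it is nonzero and is not the internal direct sum of
two nonzero submodules. -/
def IsIndecomposable (R M : Type*) [Ring R] [AddCommGroup M] [Module R M] : Prop :=
  (∃ x : M, x ≠ 0) ∧
    ∀ A B : Submodule R M, A ⊓ B = ⊥ → A ⊔ B = ⊤ → A = ⊥ ∨ B = ⊥

section Aux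

variable {R : Type u} [Ring R]

/-- A retract of an injective module is injective. -/
lemma injective_of_retract {Q M : Type u} [AddCommGroup Q] [Module R Q]
    [AddCommGroup M] [Module R M] (hQ : Module.Injective R Q)
    (i : M →ₗ[R] Q) (r : Q →ₗ[R] M) (hri : ∀ x, r (i x) = x) :
    Module.Injective R M where
  out X Y _ _ _ _ f hf g := by
    obtain ⟨h, hh⟩ := hQ.out f hf (i.comp g)
    refine ⟨r.comp h, fun x => ?_⟩
    simp only [LinearMap.comp_apply] at hh ⊢
    rw [hh x, hri]

/-- The range of an injective linear map out of a simple module is an atom. -/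
lemma isAtom_range {S M : Type u} [AddCommGroup S] [Module R S] [AddCommGroup M] [Module R M]
    [IsSimpleModule R S] (j : S →ₗ[R] M) (hj : Function.Injective j) :
    IsAtom (LinearMap.range j) := by
  constructor
  · intro h
    have : Nontrivial S := IsSimpleModule.nontrivial R S
    obtain ⟨s, hs⟩ := exists_ne (0 : S)
    have hmem : j s ∈ LinearMap.range j := LinearMap.mem_range_self j s
    rw [h, Submodule.mem_bot] at hmem
    exact hs (hj (by rw [hmem, map_zero]))
  · intro b hb
    rcases eq_bot_or_eq_top (b.comap j) with h | h
    · rw [eq_bot_iff]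
      intro x hx
      obtain ⟨s, rfl⟩ := hb.le hx
      have : s ∈ b.comap j := hx
      rw [h, Submodule.mem_bot] at this
      rw [this, map_zero]
      exact Submodule.zero_mem ⊥
    · exfalso
      apply hb.ne
      refine le_antisymm hb.le ?_
      rintro _ ⟨s, rfl⟩
      have : s ∈ b.comap j := h ▸ Submodule.mem_top
      exact this

/-- Key construction: inside an injective module `I`, any atom `S'` is contained in a
direct summand `D` of `I` which is an indecomposable injective module containing (the
pullback of) `S'` as an atom. This is the existence of an indecomposable injective hull. -/
lemma key {I : Type u} [AddCommGroup I] [Module R I] (hI : Module.Injective R I)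
    {S' : Submodule R I} (hS' : IsAtom S') :
    ∃ D : Submodule R I, S' ≤ D ∧ Module.Injective R ↥D ∧ IsIndecomposable R ↥D ∧
      IsAtom (S'.comap D.subtype) := by
  classical
  -- a maximal submodule C disjoint from S'
  obtain ⟨C, -, hC⟩ := zorn_le_nonempty₀ {C : Submodule R I | S' ⊓ C = ⊥}
    (fun c hcs hchain y hy =>
      ⟨sSup c, by
        rw [Set.mem_setOf_eq, eq_bot_iff]
        intro x hx
        rw [Submodule.mem_inf] at hx
        obtain ⟨C0, hC0c, hxC0⟩ :=
          (Submodule.mem_sSup_of_directed ⟨y, hy⟩ hchain.directedOn).1 hx.2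
        have h0 : S' ⊓ C0 = ⊥ := hcs hC0c
        exact h0 ▸ Submodule.mem_inf.mpr ⟨hx.1, hxC0⟩,
        fun z hz => le_sSup hz⟩) ⊥ (by simp)
  have hCS : S' ⊓ C = ⊥ := hC.1
  -- a maximal submodule D containing S' and disjoint from C
  obtain ⟨D, hS'D, hD⟩ := zorn_le_nonempty₀ {D : Submodule R I | S' ≤ D ∧ C ⊓ D = ⊥}
    (fun c hcs hchain y hy =>
      ⟨sSup c, ⟨le_trans (hcs hy).1 (le_sSup hy), by
        rw [eq_bot_iff]
        intro x hx
        rw [Submodule.mem_inf] at hx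
        obtain ⟨D0, hD0c, hxD0⟩ :=
          (Submodule.mem_sSup_of_directed ⟨y, hy⟩ hchain.directedOn).1 hx.2
        have h0 : C ⊓ D0 = ⊥ := (hcs hD0c).2
        exact h0 ▸ Submodule.mem_inf.mpr ⟨hx.1, hxD0⟩⟩,
        fun z hz => le_sSup hz⟩) S'
    ⟨le_rfl, (inf_comm C S').trans hCS⟩
  have hCD : C ⊓ D = ⊥ := hD.1.2
  -- the projection C ⊔ D → C, viewed as a map into I
  set W : Submodule R I := C ⊔ D with hW
  set C₁ : Submodule R ↥W := C.comap W.subtype with hC₁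
  set D₁ : Submodule R ↥W := D.comap W.subtype with hD₁
  have hdisj : Disjoint C₁ D₁ := by
    rw [Submodule.disjoint_def]
    intro x hx1 hx2
    have hmem : (x : I) ∈ C ⊓ D := Submodule.mem_inf.mpr ⟨hx1, hx2⟩
    rw [hCD, Submodule.mem_bot] at hmem
    exact Subtype.ext hmem
  have hcodis : C₁ ⊔ D₁ = ⊤ := by
    rw [eq_top_iff]
    rintro ⟨x, hx⟩ -
    obtain ⟨cc, hcc, dd, hdd, hsum⟩ := Submodule.mem_sup.mp hx
    rw [Submodule.mem_sup]
    refine ⟨⟨cc, Submodule.mem_sup_left hcc⟩, hcc, ⟨dd, Submodule.mem_sup_right hdd⟩, hdd, ?_⟩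
    exact Subtype.ext hsum
  have hcompl : IsCompl C₁ D₁ := ⟨hdisj, codisjoint_iff.mpr hcodis⟩
  let proj : ↥W →ₗ[R] I :=
    W.subtype ∘ₗ C₁.subtype ∘ₗ (C₁.linearProjOfIsCompl D₁ hcompl)
  have hprojC : ∀ (x : ↥W), x ∈ C₁ → proj x = (x : I) := by
    intro x hx
    have h1 := Submodule.linearProjOfIsCompl_apply_left hcompl ⟨x, hx⟩
    simp only [proj, LinearMap.comp_apply]
    rw [show (C₁.linearProjOfIsCompl D₁ hcompl) x = ⟨x, hx⟩ from h1]
    rfl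
  have hprojD : ∀ (x : ↥W), x ∈ D₁ → proj x = 0 := by
    intro x hx
    have h1 := Submodule.linearProjOfIsCompl_apply_right hcompl ⟨x, hx⟩
    simp only [proj, LinearMap.comp_apply]
    rw [show (C₁.linearProjOfIsCompl D₁ hcompl) x = 0 from h1]
    simp
  -- extend to g : I → I using injectivity of I
  obtain ⟨g, hg⟩ := hI.out W.subtype (Submodule.injective_subtype W) proj
  have hgC : ∀ x ∈ C, g x = x := fun x hx =>
    (hg ⟨x, Submodule.mem_sup_left hx⟩).trans (hprojC ⟨x, Submodule.mem_sup_left hx⟩ hx)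
  have hgD : ∀ x ∈ D, g x = 0 := fun x hx =>
    (hg ⟨x, Submodule.mem_sup_right hx⟩).trans (hprojD ⟨x, Submodule.mem_sup_right hx⟩ hx)
  -- kernel of g is exactly D
  have hker : LinearMap.ker g = D := by
    have hle : D ≤ LinearMap.ker g := fun x hx => LinearMap.mem_ker.mpr (hgD x hx)
    have hmem : LinearMap.ker g ∈ {D : Submodule R I | S' ≤ D ∧ C ⊓ D = ⊥} := by
      refine ⟨le_trans hS'D hle, ?_⟩
      rw [eq_bot_iff]
      intro x hx
      rw [Submodule.mem_inf] at hx
      have : g x = x := hgC x hx.1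
      have h0 : g x = 0 := LinearMap.mem_ker.mp hx.2
      rw [Submodule.mem_bot, ← this, h0]
    exact le_antisymm (hD.2 hmem hle) hle
  -- essentiality of C in the range of g
  have hess : ∀ y : I, y ∈ LinearMap.range g → y ≠ 0 →
      ∃ c ∈ C, c ≠ 0 ∧ ∃ r : R, r • y = c := by
    rintro _ ⟨x, rfl⟩ hy
    have hxD : x ∉ D := by
      intro h
      exact hy (by rw [← hker] at h; exact LinearMap.mem_ker.mp h)
    have hCine : C ⊓ (D ⊔ Submodule.span R {x}) ≠ ⊥ := by
      intro h
      have hmem' : D ⊔ Submodule.span R {x} ∈ {D : Submodule R I | S' ≤ D ∧ C ⊓ D = ⊥} :=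
        ⟨le_trans hS'D le_sup_left, h⟩
      have := hD.2 hmem' le_sup_left
      exact hxD (this (Submodule.mem_sup_right (Submodule.mem_span_singleton_self x)))
    obtain ⟨c, hc, hc0⟩ := (Submodule.ne_bot_iff _).mp hCine
    rw [Submodule.mem_inf] at hc
    obtain ⟨d, hd, z, hz, hsum⟩ := Submodule.mem_sup.mp hc.2
    obtain ⟨r, hr⟩ := Submodule.mem_span_singleton.mp hz
    refine ⟨c, hc.1, hc0, r, ?_⟩
    have h1 : g c = c := hgC c hc.1
    rw [← hsum, map_add, hgD d hd, zero_add, ← hr, map_smul] at h1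
    rw [h1, ← hsum, ← hr]
  -- range of g is exactly C, hence g is idempotent
  have hrange : LinearMap.range g = C := by
    have hCle : C ≤ LinearMap.range g := fun x hx => ⟨x, hgC x hx⟩
    have hmem : LinearMap.range g ∈ {C : Submodule R I | S' ⊓ C = ⊥} := by
      rw [Set.mem_setOf_eq, eq_bot_iff]
      intro x hx
      rw [Submodule.mem_inf] at hx
      rw [Submodule.mem_bot]
      by_contra hx0
      obtain ⟨c, hcC, hc0, r, hr⟩ := hess x hx.2 hx0
      have : c ∈ S' ⊓ C := Submodule.mem_inf.mpr ⟨hr ▸ S'.smul_mem r hx.1, hcC⟩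
      rw [hCS, Submodule.mem_bot] at this
      exact hc0 this
    exact le_antisymm (hC.2 hmem hCle) hCle
  have hidem : ∀ x, g (g x) = g x := fun x =>
    hgC _ (hrange ▸ LinearMap.mem_range_self g x)
  -- D is a retract of I, hence injective
  have hpD : ∀ x : I, x - g x ∈ D := fun x => by
    rw [← hker, LinearMap.mem_ker, map_sub, hidem, sub_self]
  let retr : I →ₗ[R] ↥D :=
    LinearMap.codRestrict D (LinearMap.id - g) (fun x => by simpa using hpD x)
  have hretr : ∀ d : ↥D, retr (D.subtype d) = d := fun d => by
    apply Subtype.ext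
    show (d : I) - g d = (d : I)
    rw [hgD d d.2, sub_zero]
  have hDinj : Module.Injective R ↥D := injective_of_retract hI D.subtype retr hretr
  -- S' is essential in D
  have hessD : ∀ x : I, x ∈ D → x ≠ 0 → S' ≤ Submodule.span R {x} := by
    intro x hxD hx0
    have h1 : S' ⊓ Submodule.span R {x} ≠ ⊥ := by
      intro hbot
      have hxC : x ∉ C := by
        intro hc
        have : x ∈ C ⊓ D := Submodule.mem_inf.mpr ⟨hc, hxD⟩
        rw [hCD, Submodule.mem_bot] at this
        exact hx0 this
      have hmem' : C ⊔ Submodule.span R {x} ∈ {C : Submodule R I | S' ⊓ C = ⊥} := by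
        rw [Set.mem_setOf_eq, eq_bot_iff]
        intro v hv
        rw [Submodule.mem_inf] at hv
        obtain ⟨cc, hcc, z, hz, hsum⟩ := Submodule.mem_sup.mp hv.2
        obtain ⟨r, hr⟩ := Submodule.mem_span_singleton.mp hz
        have hzD : z ∈ D := hr ▸ D.smul_mem r hxD
        have hccD : cc ∈ D := by
          have := D.sub_mem (hS'D hv.1) hzD
          rwa [← hsum, add_sub_cancel_right] at this
        have hcc0 : cc = 0 := by
          have : cc ∈ C ⊓ D := Submodule.mem_inf.mpr ⟨hcc, hccD⟩
          rwa [hCD, Submodule.mem_bot] at this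
        have hvz : v = z := by rw [← hsum, hcc0, zero_add]
        have : v ∈ S' ⊓ Submodule.span R {x} := Submodule.mem_inf.mpr ⟨hv.1, hvz ▸ hz⟩
        rwa [hbot] at this
      have hCle2 := hC.2 hmem' le_sup_left
      exact hxC (hCle2 (Submodule.mem_sup_right (Submodule.mem_span_singleton_self x)))
    have h2 : S' ⊓ Submodule.span R {x} = S' := by
      rcases lt_or_eq_of_le (inf_le_left : S' ⊓ Submodule.span R {x} ≤ S') with hlt | heq
      · exact absurd (hS'.2 _ hlt) h1
      · exact heq
    exact le_trans (le_of_eq h2.symm) inf_le_right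
  -- D is indecomposable
  obtain ⟨s0, hs0S, hs00⟩ := (Submodule.ne_bot_iff _).mp hS'.1
  have hind : IsIndecomposable R ↥D := by
    constructor
    · exact ⟨⟨s0, hS'D hs0S⟩, fun h => hs00 (congrArg Subtype.val h)⟩
    · intro U V hUV hUVtop
      by_contra hcon
      push_neg at hcon
      obtain ⟨hU, hV⟩ := hcon
      obtain ⟨u, hu, hu0⟩ := (Submodule.ne_bot_iff _).mp hU
      obtain ⟨v, hv, hv0⟩ := (Submodule.ne_bot_iff _).mp hV
      have h1u : S' ≤ Submodule.span R {(u : I)} :=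
        hessD u u.2 (fun h => hu0 (Subtype.ext h))
      have h1v : S' ≤ Submodule.span R {(v : I)} :=
        hessD v v.2 (fun h => hv0 (Subtype.ext h))
      have h2u : Submodule.span R {(u : I)} ≤ U.map D.subtype := by
        rw [Submodule.span_le, Set.singleton_subset_iff]
        exact ⟨u, hu, rfl⟩
      have h2v : Submodule.span R {(v : I)} ≤ V.map D.subtype := by
        rw [Submodule.span_le, Set.singleton_subset_iff]
        exact ⟨v, hv, rfl⟩
      have h5 : S' ≤ (U.map D.subtype) ⊓ (V.map D.subtype) :=
        le_inf (le_trans h1u h2u) (le_trans h1v h2v)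
      rw [← Submodule.map_inf D.subtype Subtype.coe_injective, hUV, Submodule.map_bot,
        le_bot_iff] at h5
      exact hS'.1 h5
  -- the pullback of S' in D is an atom
  have hatom : IsAtom (S'.comap D.subtype) := by
    constructor
    · intro h
      have hm : (⟨s0, hS'D hs0S⟩ : ↥D) ∈ S'.comap D.subtype := hs0S
      rw [h, Submodule.mem_bot] at hm
      exact hs00 (congrArg Subtype.val hm)
    · intro b hb
      have hmap : b.map D.subtype < S' := by
        have hle : b.map D.subtype ≤ S' := by
          rintro _ ⟨x, hx, rfl⟩
          exact hb.le hx
        refine lt_of_le_of_ne hle (fun heq => ?_)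
        apply hb.ne
        apply Submodule.map_injective_of_injective (f := D.subtype) Subtype.coe_injective
        rw [heq, Submodule.map_comap_subtype, inf_eq_right.mpr hS'D]
      have hbot := hS'.2 _ hmap
      rw [eq_bot_iff]
      intro x hx
      have : (x : I) ∈ b.map D.subtype := ⟨x, hx, rfl⟩
      rw [hbot, Submodule.mem_bot] at this
      rw [Submodule.mem_bot]
      exact Subtype.ext this
  exact ⟨D, hS'D, hDinj, hind, hatom⟩

/-- The main result, for an arbitrary ring. -/
theorem main_aux {R : Type u} [Ring R]
    {E : Type u} [AddCommGroup E] [Module R E]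
    (hEind : IsIndecomposable R E) (hEinj : Module.Injective R E)
    (A : Type u) [AddCommGroup A] [Module R A] (hAfg : Module.Finite R A)
    (hA : ∀ (F : Type u) [AddCommGroup F] [Module R F],
      IsIndecomposable R F → Module.Injective R F →
        ((∃ φ : A →ₗ[R] F, φ ≠ 0) ↔ Nonempty (F ≃ₗ[R] E))) :
    ∃ S : Submodule R E, IsAtom S := by
  -- a nonzero map φ : A → E
  obtain ⟨φ, hφ⟩ := (hA E hEind hEinj).mpr ⟨LinearEquiv.refl R E⟩
  have hkerφ : LinearMap.ker φ ≠ ⊤ := fun h => hφ (LinearMap.ker_eq_top.mp h)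
  -- a maximal submodule U of A containing ker φ
  have hcoatomic : IsCoatomic (Submodule R A) :=
    CompleteLattice.coatomic_of_top_compact
      ((Submodule.fg_iff_compact _).mp (Module.finite_def.mp hAfg))
  obtain ⟨U, hU, hkerU⟩ :=
    (eq_top_or_exists_le_coatom (LinearMap.ker φ)).resolve_left hkerφ
  haveI hsimple : IsSimpleModule R (A ⧸ U) := isSimpleModule_iff_isCoatom.mpr hU
  -- embed the simple module A ⧸ U into an injective module
  haveI : CategoryTheory.EnoughInjectives (ModuleCat.{u} R) := inferInstance
  set Iobj : ModuleCat.{u} R :=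
    CategoryTheory.Injective.under (ModuleCat.of R (A ⧸ U)) with hIobj
  haveI : CategoryTheory.Injective (ModuleCat.of R ↥Iobj) := by
    show CategoryTheory.Injective Iobj
    infer_instance
  have hIinj : Module.Injective R ↥Iobj := Module.injective_module_of_injective_object R ↥Iobj
  let j : (A ⧸ U) →ₗ[R] ↥Iobj := (CategoryTheory.Injective.ι (ModuleCat.of R (A ⧸ U))).hom
  have hjinj : Function.Injective j := by
    have : CategoryTheory.Mono (CategoryTheory.Injective.ι (ModuleCat.of R (A ⧸ U))) :=
      inferInstance
    exact (ModuleCat.mono_iff_injective _).mp this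
  have hatomS' : IsAtom (LinearMap.range j) := isAtom_range j hjinj
  -- an indecomposable injective hull D of the simple module inside Iobj
  obtain ⟨D, hSD, hDinj, hDind, hDatom⟩ := key hIinj hatomS'
  -- the nonzero map ψ : A → D
  let j' : (A ⧸ U) →ₗ[R] ↥D :=
    j.codRestrict D (fun q => hSD (LinearMap.mem_range_self j q))
  let ψ : A →ₗ[R] ↥D := j'.comp U.mkQ
  have hψ : ψ ≠ 0 := by
    obtain ⟨a, ha⟩ : ∃ a : A, a ∉ U := by
      by_contra h
      push_neg at h
      exact hU.1 (eq_top_iff.mpr fun x _ => h x)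
    intro h0
    apply ha
    have h1 : ψ a = 0 := by rw [h0]; rfl
    have h2 : j (U.mkQ a) = 0 := congrArg Subtype.val h1
    have h3 : U.mkQ a = 0 := hjinj (by rw [h2, map_zero])
    rw [Submodule.mkQ_apply, Submodule.Quotient.mk_eq_zero] at h3
    exact h3
  -- the hypothesis forces D ≅ E
  obtain ⟨e⟩ := (hA ↥D hDind hDinj).mp ⟨ψ, hψ⟩
  refine ⟨Submodule.orderIsoMapComap e ((LinearMap.range j).comap D.subtype), ?_⟩
  exact (OrderIso.isAtom_iff (Submodule.orderIsoMapComap e) _).mpr hDatom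

end Aux

theorem stmt3 {R : Type u} [Ring R] [IsNoetherian Rᵐᵒᵖ R]
    {E : Type u} [AddCommGroup E] [Module Rᵐᵒᵖ E]
    (hEind : IsIndecomposable Rᵐᵒᵖ E) (hEinj : Module.Injective Rᵐᵒᵖ E)
    (A : Type u) [AddCommGroup A] [Module Rᵐᵒᵖ A] (hAfg : Module.Finite Rᵐᵒᵖ A)
    (hA : ∀ (F : Type u) [AddCommGroup F] [Module Rᵐᵒᵖ F],
      IsIndecomposable Rᵐᵒᵖ F → Module.Injective Rᵐᵒᵖ F →
        ((∃ φ : A →ₗ[Rᵐᵒᵖ] F, φ ≠ 0) ↔ Nonempty (F ≃ₗ[Rᵐᵒᵖ] E))) :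
    ∃ S : Submodule Rᵐᵒᵖ E, IsAtom S := by
  exact main_aux hEind hEinj A hAfg hA
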